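/- arXiv:2408.05349 — 4 statements merged into one kernel-verified Lean document; each statement's English description precedes it below -/
import Mathlib

section
/- The signed prefix reversals r_1, …, r_n generate the hyperoctahedral group B_n. -/
/-- The set `±[n] = {-n, …, -1, 1, …, n}` as a subtype of `ℤ`. -/
def PM (n : ℕ) : Type := {x : ℤ // x ≠ 0 ∧ x.natAbs ≤ n}

instance (n : ℕ) : DecidableEq (PM n) := fun a b =>
  decidable_of_iff _ Subtype.ext_iff.symm

instance (n : ℕ) : Finite (PM n) :=
  Set.Finite.to_subtype (s := {x : ℤ | x ≠ 0 ∧ x.natAbs ≤ n})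
    (Set.Finite.subset (Set.finite_Icc (-(n : ℤ)) n)
      (fun x hx => by simp only [Set.mem_setOf_eq] at hx; simp only [Set.mem_Icc]; omega))

noncomputable instance (n : ℕ) : Fintype (PM n) := Fintype.ofFinite _

/-- Negation on `±[n]`. -/
def negPM (n : ℕ) (x : PM n) : PM n :=
  ⟨-x.1, by have hx := x.2; constructor <;> omega⟩

/-- The `i`-th signed prefix reversal `r_i = (1,-i)(2,-(i-1))⋯(i,-1)` as a
function on `ℤ`: it sends `x` with `1 ≤ x ≤ i` to `-(i+1-x)`, sends `x` with
`-i ≤ x ≤ -1` to `i+1+x`, and fixes every other `x`. -/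
def rfun (i x : ℤ) : ℤ :=
  if 1 ≤ x ∧ x ≤ i then x - i - 1 else if -i ≤ x ∧ x ≤ -1 then x + i + 1 else x

lemma rfun_invol (i : ℤ) : Function.Involutive (rfun i) := by
  intro x; unfold rfun; split_ifs <;> omega

/-- The signed prefix reversal `r_{i+1}` (for `i : Fin n`, so that the
one-based index `i+1` ranges over `1, …, n`) as a map `±[n] → ±[n]`. -/
def rMap (n : ℕ) (i : Fin n) (x : PM n) : PM n :=
  ⟨rfun ((i : ℕ) + 1) x.1, by
    have hx := x.2; have hi := i.2; unfold rfun; split_ifs <;> constructor <;> omega⟩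

/-- The signed prefix reversal `r_{i+1}` as a permutation of `±[n]`. -/
def rPerm (n : ℕ) (i : Fin n) : Equiv.Perm (PM n) :=
  Function.Involutive.toPerm (rMap n i)
    (by intro x; apply Subtype.ext; exact rfun_invol _ x.1)

/-- The hyperoctahedral group `B_n`, realized as the subgroup of permutations
`σ` of `±[n]` satisfying `σ(-x) = -σ(x)`. -/
def Bgroup (n : ℕ) : Subgroup (Equiv.Perm (PM n)) where
  carrier := {σ | ∀ x, σ (negPM n x) = negPM n (σ x)}
  one_mem' := fun _ => rfl
  mul_mem' := by
    intro a b ha hb x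
    simp only [Equiv.Perm.mul_apply, hb x, ha (b x)]
  inv_mem' := by
    intro a ha x
    have h := ha (a⁻¹ x)
    rw [show a (a⁻¹ x) = x from a.apply_symm_apply x] at h
    rw [← h]
    exact a.symm_apply_apply _

lemma rPerm_mem (n : ℕ) (i : Fin n) : rPerm n i ∈ Bgroup n := by
  intro x
  apply Subtype.ext
  show rfun ((i : ℕ) + 1) (-x.1) = -(rfun ((i : ℕ) + 1) x.1)
  have hx := x.2
  unfold rfun
  split_ifs <;> omega

/-- The signed prefix reversal `r_{i+1}` as an element of `B_n`. -/
def rElem (n : ℕ) (i : Fin n) : ↥(Bgroup n) := ⟨rPerm n i, rPerm_mem n i⟩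

lemma rElem_mul_self (n : ℕ) (i : Fin n) : rElem n i * rElem n i = 1 := by
  apply Subtype.ext
  apply Equiv.ext
  intro x
  apply Subtype.ext
  exact rfun_invol _ x.1

/-- The burnt pancake graph `BP_n`: the Cayley graph of `B_n` with respect to
the signed prefix reversals `r_1, …, r_n`. -/
def BP (n : ℕ) : SimpleGraph ↥(Bgroup n) where
  Adj σ τ := σ ≠ τ ∧ ∃ i : Fin n, τ = σ * rElem n i
  symm := ⟨by
    rintro σ τ ⟨hne, i, rfl⟩
    exact ⟨hne.symm, i, by rw [mul_assoc, rElem_mul_self, mul_one]⟩⟩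
  loopless := ⟨fun σ h => h.1 rfl⟩

instance (n : ℕ) : Finite ↥(Bgroup n) := Subtype.finite

noncomputable instance (n : ℕ) : Fintype ↥(Bgroup n) := Fintype.ofFinite _

noncomputable instance (n : ℕ) (v : ↥(Bgroup n)) : Fintype ((BP n).neighborSet v) :=
  Fintype.ofFinite _

lemma rPerm_mem_closure (n : ℕ) (i : Fin n) :
    rPerm n i ∈ Subgroup.closure (Set.range (rPerm n)) :=
  Subgroup.subset_closure ⟨i, rfl⟩

lemma rPerm_val (n : ℕ) (i : Fin n) (x : PM n) :
    ((rPerm n i) x).1 = rfun ((i : ℕ) + 1) x.1 := rfl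

set_option maxHeartbeats 2000000 in
lemma fix_mem_closure (n : ℕ) :
    ∀ m : ℕ, ∀ σ : Equiv.Perm (PM n), σ ∈ Bgroup n →
    (∀ x : PM n, m < x.1.natAbs → σ x = x) →
    σ ∈ Subgroup.closure (Set.range (rPerm n)) := by
  intro m
  induction m with
  | zero =>
    intro σ _ hfix
    have : σ = 1 := by
      apply Equiv.ext
      intro x
      have hx := x.2.1
      exact hfix x (by omega)
    rw [this]; exact one_mem _
  | succ m ih =>
    intro σ hσ hfix
    by_cases hmn : n ≤ m
    · exact ih σ hσ (fun x hx => absurd hx (by have := x.2.2; omega))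
    · push_neg at hmn
      have he : ((m : ℤ) + 1 ≠ 0) ∧ ((m : ℤ) + 1).natAbs ≤ n := by omega
      set e : PM n := ⟨(m : ℤ) + 1, he⟩ with hedef
      set c : PM n := σ⁻¹ e with hcdef
      have hce : σ c = e := σ.apply_symm_apply e
      have hc : c.1.natAbs ≤ m + 1 := by
        by_contra h
        push_neg at h
        have h1 : σ c = c := hfix c (by omega)
        have h2 : c = e := h1.symm.trans hce
        have h3 : c.1 = (m : ℤ) + 1 := congrArg Subtype.val h2
        omega
      have hc0 := c.2.1
      rcases lt_or_gt_of_ne hc0 with hneg | hpos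
      · -- c.1 < 0 : use r_k, r_1, r_{m+1} with k = -c.1
        set k : ℕ := c.1.natAbs with hkdef
        have hk1 : 1 ≤ k := by omega
        have hkc : c.1 = -(k : ℤ) := by omega
        set a : Fin n := ⟨k - 1, by omega⟩ with hadef
        set a1 : Fin n := ⟨0, by omega⟩ with ha1def
        set b : Fin n := ⟨m, hmn⟩ with hbdef
        set τ : Equiv.Perm (PM n) :=
          σ * rPerm n a * rPerm n a1 * rPerm n b with hτdef
        have hτB : τ ∈ Bgroup n :=
          mul_mem (mul_mem (mul_mem hσ (rPerm_mem n a)) (rPerm_mem n a1))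
            (rPerm_mem n b)
        have hτfix : ∀ x : PM n, m < x.1.natAbs → τ x = x := by
          intro x hx
          have hx2 := x.2
          have hτx : τ x = σ (rPerm n a (rPerm n a1 (rPerm n b x))) := rfl
          have hval : ((rPerm n a (rPerm n a1 (rPerm n b x)))).1 =
              rfun ((k : ℤ)) (rfun 1 (rfun ((m : ℤ) + 1) x.1)) := by
            show rfun (((a : ℕ) : ℤ) + 1) (rfun (((a1 : ℕ) : ℤ) + 1)
              (rfun (((b : ℕ) : ℤ) + 1) x.1)) = _
            have : ((a : ℕ) : ℤ) + 1 = (k : ℤ) := by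
              simp only [hadef]; push_cast; omega
            rw [this]
            norm_num [ha1def, hbdef]
          rcases lt_trichotomy x.1.natAbs (m + 1) with h | h | h
          · omega
          · -- |x| = m + 1
            rcases lt_trichotomy x.1 0 with hxneg | hx0 | hxpos
            · -- x.1 = -(m+1) : inner = ⟨k⟩ = -c
              have hinner : rPerm n a (rPerm n a1 (rPerm n b x)) = negPM n c := by
                apply Subtype.ext
                rw [hval]
                show _ = -c.1
                unfold rfun
                split_ifs <;> omega
              rw [hτx, hinner, hσ c, hce]
              apply Subtype.ext
              show -e.1 = x.1
              simp only [hedef]; omega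
            · omega
            · -- x.1 = m+1 : inner = ⟨-k⟩ = c
              have hinner : rPerm n a (rPerm n a1 (rPerm n b x)) = c := by
                apply Subtype.ext
                rw [hval, hkc]
                unfold rfun
                split_ifs <;> omega
              rw [hτx, hinner, hce]
              apply Subtype.ext
              show e.1 = x.1
              simp only [hedef]; omega
          · -- |x| > m + 1 : everything fixes x
            have hinner : rPerm n a (rPerm n a1 (rPerm n b x)) = x := by
              apply Subtype.ext
              rw [hval]
              unfold rfun
              split_ifs <;> omega
            rw [hτx, hinner]
            exact hfix x (by omega)
        have hτmem := ih τ hτB hτfix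
        have hσeq : σ = τ * (rPerm n b)⁻¹ * (rPerm n a1)⁻¹ * (rPerm n a)⁻¹ := by
          rw [hτdef]; group
        rw [hσeq]
        exact mul_mem (mul_mem (mul_mem hτmem
          (inv_mem (rPerm_mem_closure n b))) (inv_mem (rPerm_mem_closure n a1)))
          (inv_mem (rPerm_mem_closure n a))
      · -- c.1 > 0 : use r_k, r_{m+1} with k = c.1
        set k : ℕ := c.1.natAbs with hkdef
        have hk1 : 1 ≤ k := by omega
        have hkc : c.1 = (k : ℤ) := by omega
        set a : Fin n := ⟨k - 1, by omega⟩ with hadef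
        set b : Fin n := ⟨m, hmn⟩ with hbdef
        set τ : Equiv.Perm (PM n) := σ * rPerm n a * rPerm n b with hτdef
        have hτB : τ ∈ Bgroup n :=
          mul_mem (mul_mem hσ (rPerm_mem n a)) (rPerm_mem n b)
        have hτfix : ∀ x : PM n, m < x.1.natAbs → τ x = x := by
          intro x hx
          have hx2 := x.2
          have hτx : τ x = σ (rPerm n a (rPerm n b x)) := rfl
          have hval : ((rPerm n a (rPerm n b x))).1 =
              rfun ((k : ℤ)) (rfun ((m : ℤ) + 1) x.1) := by
            show rfun (((a : ℕ) : ℤ) + 1) (rfun (((b : ℕ) : ℤ) + 1) x.1) = _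
            have : ((a : ℕ) : ℤ) + 1 = (k : ℤ) := by
              simp only [hadef]; push_cast; omega
            rw [this]
          rcases lt_trichotomy x.1.natAbs (m + 1) with h | h | h
          · omega
          · rcases lt_trichotomy x.1 0 with hxneg | hx0 | hxpos
            · -- x.1 = -(m+1) : inner = ⟨-k⟩ = -c
              have hinner : rPerm n a (rPerm n b x) = negPM n c := by
                apply Subtype.ext
                rw [hval]
                show _ = -c.1
                unfold rfun
                split_ifs <;> omega
              rw [hτx, hinner, hσ c, hce]
              apply Subtype.ext
              show -e.1 = x.1
              simp only [hedef]; omega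
            · omega
            · -- x.1 = m+1 : inner = ⟨k⟩ = c
              have hinner : rPerm n a (rPerm n b x) = c := by
                apply Subtype.ext
                rw [hval, hkc]
                unfold rfun
                split_ifs <;> omega
              rw [hτx, hinner, hce]
              apply Subtype.ext
              show e.1 = x.1
              simp only [hedef]; omega
          · have hinner : rPerm n a (rPerm n b x) = x := by
              apply Subtype.ext
              rw [hval]
              unfold rfun
              split_ifs <;> omega
            rw [hτx, hinner]
            exact hfix x (by omega)
        have hτmem := ih τ hτB hτfix
        have hσeq : σ = τ * (rPerm n b)⁻¹ * (rPerm n a)⁻¹ := by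
          rw [hτdef]; group
        rw [hσeq]
        exact mul_mem (mul_mem hτmem (inv_mem (rPerm_mem_closure n b)))
          (inv_mem (rPerm_mem_closure n a))

/-- The signed prefix reversals `r_1, …, r_n` generate the
hyperoctahedral group `B_n`. -/
theorem prefixReversals_generate (n : ℕ) :
    Subgroup.closure (Set.range (rPerm n)) = Bgroup n := by
  apply le_antisymm
  · rw [Subgroup.closure_le]
    rintro _ ⟨i, rfl⟩
    exact rPerm_mem n i
  · intro σ hσ
    exact fix_mem_closure n n σ hσ (fun x hx => absurd hx (by have := x.2.2; omega))
end

section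
/- For n ≥ 1, the sum of the permutation matrices of the signed prefix reversals r_1,…,r_n (acting on ±[n] ordered as −n < ⋯ < −1 < 1 < ⋯ < n) equals the 2n×2n block matrix M(BP_n) = [[A_n, D_n^T],[D_n, C_n]], where A_n is the n×n diagonal matrix with entries a_{ii} = n−i, C_n is diagonal with c_{ii} = i−1, and D_n is the n×n upper triangular matrix with all entries on and above the diagonal equal to 1. -/
/-- Identification of `Fin n ⊕ Fin n` with `±[n] = {-n,…,-1,1,…,n}` in
increasing order: `inl j ↦ j - n` (giving `-n,…,-1`) and `inr j ↦ j + 1`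
(giving `1,…,n`). -/
def toInt (n : ℕ) : Fin n ⊕ Fin n → ℤ :=
  Sum.elim (fun j => (j : ℤ) - n) (fun j => (j : ℤ) + 1)

/-- The permutation matrix `P(r_i)` of the signed prefix reversal `r_i`, with
rows and columns indexed by `±[n]` in increasing order: the `(x,y)` entry is
`1` iff `r_i(y) = x`. -/
def Pmat (n : ℕ) (i : ℤ) : Matrix (Fin n ⊕ Fin n) (Fin n ⊕ Fin n) ℝ :=
  Matrix.of fun x y => if rfun i (toInt n y) = toInt n x then 1 else 0

/-- The `n × n` diagonal matrix `A_n` with `(i,i)` entry `n - i`. -/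
def An (n : ℕ) : Matrix (Fin n) (Fin n) ℝ :=
  Matrix.diagonal fun j => (n : ℝ) - (j : ℕ) - 1

/-- The `n × n` diagonal matrix `C_n` with `(i,i)` entry `i - 1`. -/
def Cn (n : ℕ) : Matrix (Fin n) (Fin n) ℝ :=
  Matrix.diagonal fun j => ((j : ℕ) : ℝ)

/-- The `n × n` upper triangular all-ones matrix `D_n`. -/
def Dn (n : ℕ) : Matrix (Fin n) (Fin n) ℝ :=
  Matrix.of fun j k => if j ≤ k then 1 else 0

/-- The `2n × 2n` block matrix `M(BP_n) = [[A_n, D_nᵀ], [D_n, C_n]]`. -/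
def Mbp (n : ℕ) : Matrix (Fin n ⊕ Fin n) (Fin n ⊕ Fin n) ℝ :=
  Matrix.fromBlocks (An n) (Dn n).transpose (Dn n) (Cn n)

/-- For `n ≥ 1`, the sum of the permutation matrices of the
signed prefix reversals `r_1, …, r_n` (acting on `±[n]` ordered as
`-n < ⋯ < -1 < 1 < ⋯ < n`) equals the block matrix
`M(BP_n) = [[A_n, D_nᵀ], [D_n, C_n]]`. -/
theorem sum_Pmat_eq_Mbp (n : ℕ) (hn : 1 ≤ n) :
    ∑ i ∈ Finset.Icc (1 : ℤ) (n : ℤ), Pmat n i = Mbp n := by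
  ext x y
  rw [Matrix.sum_apply]
  simp only [Pmat, Matrix.of_apply]
  rw [Finset.sum_boole]
  cases x with
  | inl j =>
    have hj := j.isLt
    cases y with
    | inl k =>
      have hk := k.isLt
      by_cases hjk : j = k
      · subst hjk
        have hfil : (Finset.Icc (1:ℤ) n).filter
            (fun i => rfun i (toInt n (Sum.inl j)) = toInt n (Sum.inl j)) =
            Finset.Icc (1:ℤ) ((n:ℤ) - j - 1) := by
          ext i
          rw [Finset.mem_filter]
          simp only [Finset.mem_filter, Finset.mem_Icc, rfun, toInt, Sum.elim_inl]
          split_ifs <;> omega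
        rw [hfil, Int.card_Icc]
        show ((((n:ℤ) - j - 1 + 1 - 1).toNat : ℕ) : ℝ) = Mbp n (Sum.inl j) (Sum.inl j)
        rw [Mbp, Matrix.fromBlocks_apply₁₁, An, Matrix.diagonal_apply_eq]
        have h2 : ((((n:ℤ) - j - 1 + 1 - 1).toNat : ℤ) : ℝ) = ((n:ℝ)) - (j:ℕ) - 1 := by
          rw [Int.toNat_of_nonneg (by omega)]; push_cast; ring
        exact_mod_cast h2
      · have hne : (j:ℕ) ≠ (k:ℕ) := fun h => hjk (Fin.ext h)
        have hfil : (Finset.Icc (1:ℤ) n).filter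
            (fun i => rfun i (toInt n (Sum.inl k)) = toInt n (Sum.inl j)) = ∅ := by
          ext i
          rw [Finset.mem_filter]
          simp only [Finset.mem_filter, Finset.mem_Icc, rfun, toInt, Sum.elim_inl,
            Finset.notMem_empty, iff_false]
          split_ifs <;> omega
        rw [hfil, Mbp, Matrix.fromBlocks_apply₁₁, An, Matrix.diagonal_apply_ne _ hjk]
        simp
    | inr k =>
      have hk := k.isLt
      by_cases hkj : (k:ℕ) ≤ (j:ℕ)
      · have hfil : (Finset.Icc (1:ℤ) n).filter
            (fun i => rfun i (toInt n (Sum.inr k)) = toInt n (Sum.inl j)) =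
            {(n:ℤ) + k - j} := by
          ext i
          rw [Finset.mem_filter]
          simp only [Finset.mem_filter, Finset.mem_Icc, rfun, toInt, Sum.elim_inl,
            Sum.elim_inr, Finset.mem_singleton]
          split_ifs <;> omega
        rw [hfil, Finset.card_singleton, Mbp, Matrix.fromBlocks_apply₁₂,
          Matrix.transpose_apply, Dn, Matrix.of_apply, if_pos (show k ≤ j from hkj)]
        simp
      · have hfil : (Finset.Icc (1:ℤ) n).filter
            (fun i => rfun i (toInt n (Sum.inr k)) = toInt n (Sum.inl j)) = ∅ := by
          ext i
          rw [Finset.mem_filter]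
          simp only [Finset.mem_filter, Finset.mem_Icc, rfun, toInt, Sum.elim_inl,
            Sum.elim_inr, Finset.notMem_empty, iff_false]
          split_ifs <;> omega
        rw [hfil, Mbp, Matrix.fromBlocks_apply₁₂, Matrix.transpose_apply, Dn,
          Matrix.of_apply, if_neg (fun h => hkj (Fin.le_def.mp h))]
        simp
  | inr j =>
    have hj := j.isLt
    cases y with
    | inl k =>
      have hk := k.isLt
      by_cases hjk : (j:ℕ) ≤ (k:ℕ)
      · have hfil : (Finset.Icc (1:ℤ) n).filter
            (fun i => rfun i (toInt n (Sum.inl k)) = toInt n (Sum.inr j)) =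
            {(n:ℤ) - k + j} := by
          ext i
          rw [Finset.mem_filter]
          simp only [Finset.mem_filter, Finset.mem_Icc, rfun, toInt, Sum.elim_inl,
            Sum.elim_inr, Finset.mem_singleton]
          split_ifs <;> omega
        rw [hfil, Finset.card_singleton, Mbp, Matrix.fromBlocks_apply₂₁, Dn,
          Matrix.of_apply, if_pos (show j ≤ k from hjk)]
        simp
      · have hfil : (Finset.Icc (1:ℤ) n).filter
            (fun i => rfun i (toInt n (Sum.inl k)) = toInt n (Sum.inr j)) = ∅ := by
          ext i
          rw [Finset.mem_filter]
          simp only [Finset.mem_filter, Finset.mem_Icc, rfun, toInt, Sum.elim_inl,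
            Sum.elim_inr, Finset.notMem_empty, iff_false]
          split_ifs <;> omega
        rw [hfil, Mbp, Matrix.fromBlocks_apply₂₁, Dn, Matrix.of_apply, if_neg (fun h => hjk (Fin.le_def.mp h))]
        simp
    | inr k =>
      have hk := k.isLt
      by_cases hjk : j = k
      · subst hjk
        have hfil : (Finset.Icc (1:ℤ) n).filter
            (fun i => rfun i (toInt n (Sum.inr j)) = toInt n (Sum.inr j)) =
            Finset.Icc (1:ℤ) (j:ℤ) := by
          ext i
          rw [Finset.mem_filter]
          simp only [Finset.mem_filter, Finset.mem_Icc, rfun, toInt, Sum.elim_inr]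
          split_ifs <;> omega
        rw [hfil, Int.card_Icc, Mbp, Matrix.fromBlocks_apply₂₂, Cn,
          Matrix.diagonal_apply_eq]
        have h2 : ((((j:ℤ) + 1 - 1).toNat : ℤ) : ℝ) = ((j:ℕ) : ℝ) := by
          rw [Int.toNat_of_nonneg (by omega)]; push_cast; ring
        exact_mod_cast h2
      · have hne : (j:ℕ) ≠ (k:ℕ) := fun h => hjk (Fin.ext h)
        have hfil : (Finset.Icc (1:ℤ) n).filter
            (fun i => rfun i (toInt n (Sum.inr k)) = toInt n (Sum.inr j)) = ∅ := by
          ext i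
          rw [Finset.mem_filter]
          simp only [Finset.mem_filter, Finset.mem_Icc, rfun, toInt, Sum.elim_inr,
            Finset.notMem_empty, iff_false]
          split_ifs <;> omega
        rw [hfil, Mbp, Matrix.fromBlocks_apply₂₂, Cn, Matrix.diagonal_apply_ne _ hjk]
        simp
end

section
/- For n ≥ 3, the vector (n−2, −1, …, −1, 0, 0, −1, …, −1, n−2) of length 2n (with n−2 entries −1 in each block) is an eigenvector of M(BP_n) with eigenvalue n−1. -/
/-- The vector `(n-2, -1, …, -1, 0, 0, -1, …, -1, n-2)` of length `2n`, with
`n-2` entries `-1` in each block (0-indexed positions: in the first block,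
position `0` carries `n-2`, positions `1,…,n-2` carry `-1`, position `n-1`
carries `0`; symmetrically in the second block). -/
def v8 (n : ℕ) : Fin n ⊕ Fin n → ℝ :=
  Sum.elim
    (fun j => if (j : ℕ) = 0 then (n : ℝ) - 2 else if (j : ℕ) = n - 1 then 0 else -1)
    (fun j => if (j : ℕ) = n - 1 then (n : ℝ) - 2 else if (j : ℕ) = 0 then 0 else -1)
open Finset in
lemma sum_range_if0' (m : ℕ) (hm : 1 ≤ m) (c : ℝ) :
    ∑ j ∈ range m, (if j = 0 then c else -1) = c - m + 1 := by
  have h : ∀ j, (if j = 0 then c else (-1:ℝ)) = (if j = 0 then c + 1 else 0) + (-1) := by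
    intro j; split <;> ring
  simp_rw [h, Finset.sum_add_distrib, Finset.sum_ite_eq' (range m) 0 (fun _ => c + 1),
    Finset.sum_const]
  have : (0:ℕ) ∈ range m := by simp; omega
  rw [if_pos this]
  simp; ring

/-- second-block vector as a function on ℕ -/
def wy (n : ℕ) : ℕ → ℝ := fun j => if j = n-1 then (n:ℝ)-2 else if j = 0 then 0 else -1
/-- first-block vector as a function on ℕ -/
def wx (n : ℕ) : ℕ → ℝ := fun j => if j = 0 then (n:ℝ)-2 else if j = n-1 then 0 else -1

open Finset in
lemma sumy (n i : ℕ) (hn : 3 ≤ n) (hi : i < n) :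
    ∑ j ∈ range n, (if j ≤ i then wy n j else 0) = if i = n-1 then 0 else -(i:ℝ) := by
  have hcast : ((n - 1 : ℕ) : ℝ) = (n:ℝ) - 1 := by
    rw [Nat.cast_sub (by omega : 1 ≤ n)]; norm_num
  rw [← Finset.sum_filter]
  have hf : filter (· ≤ i) (range n) = range (i+1) := by
    ext j; simp only [mem_filter, mem_range, Nat.lt_succ_iff]; omega
  rw [hf]
  by_cases h : i = n - 1
  · subst h
    rw [if_pos rfl, show n - 1 + 1 = n by omega]
    have hsum : ∑ j ∈ range n, wy n j = ∑ j ∈ range (n-1), wy n j + wy n (n-1) := by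
      rw [← Finset.sum_range_succ, show n - 1 + 1 = n from by omega]
    rw [hsum]
    have h1 : ∀ j ∈ range (n-1), wy n j = (if j = 0 then (0:ℝ) else -1) := by
      intro j hj; simp only [mem_range] at hj
      simp only [wy]; rw [if_neg (by omega)]
    rw [Finset.sum_congr rfl h1, sum_range_if0' _ (by omega)]
    have h2 : wy n (n-1) = (n:ℝ) - 2 := by simp [wy]
    rw [h2, hcast]; ring
  · rw [if_neg h]
    have h1 : ∀ j ∈ range (i+1), wy n j = (if j = 0 then (0:ℝ) else -1) := by
      intro j hj; simp only [mem_range, Nat.lt_succ_iff] at hj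
      simp only [wy]; rw [if_neg (by omega)]
    rw [Finset.sum_congr rfl h1, sum_range_if0' _ (by omega)]
    push_cast; ring

open Finset in
lemma sumx (n i : ℕ) (hn : 3 ≤ n) (hi : i < n) :
    ∑ j ∈ range n, (if i ≤ j then wx n j else 0) = if i = 0 then 0 else -((n:ℝ) - 1 - i) := by
  have hcast : ((n - 1 : ℕ) : ℝ) = (n:ℝ) - 1 := by
    rw [Nat.cast_sub (by omega : 1 ≤ n)]; norm_num
  rw [← Finset.sum_filter]
  have hf : filter (i ≤ ·) (range n) = Ico i n := by
    ext j; simp only [mem_filter, mem_range, mem_Ico]; omega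
  rw [hf]
  have h2 : wx n (n-1) = 0 := by
    simp only [wx]; rw [if_neg (by omega)]; simp
  by_cases h : i = 0
  · subst h
    rw [if_pos rfl, show Ico 0 n = range n from by rw [Finset.range_eq_Ico]]
    have hsum : ∑ j ∈ range n, wx n j = ∑ j ∈ range (n-1), wx n j + wx n (n-1) := by
      rw [← Finset.sum_range_succ, show n - 1 + 1 = n from by omega]
    rw [hsum]
    have h1 : ∀ j ∈ range (n-1), wx n j = (if j = 0 then (n:ℝ)-2 else -1) := by
      intro j hj; simp only [mem_range] at hj
      simp only [wx]; split
      · rfl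
      · rw [if_neg (by omega)]
    rw [Finset.sum_congr rfl h1, sum_range_if0' _ (by omega), h2, hcast]; ring
  · rw [if_neg h]
    have hsum : ∑ j ∈ Ico i n, wx n j = ∑ j ∈ Ico i (n-1), wx n j + wx n (n-1) := by
      rw [← Finset.sum_Ico_succ_top (by omega : i ≤ n - 1), show n - 1 + 1 = n from by omega]
    rw [hsum]
    have h1 : ∀ j ∈ Ico i (n-1), wx n j = (-1:ℝ) := by
      intro j hj; simp only [mem_Ico] at hj
      simp only [wx]; rw [if_neg (by omega), if_neg (by omega)]
    rw [Finset.sum_congr rfl h1, h2, Finset.sum_const, Nat.card_Ico]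
    have hc2 : ((n - 1 - i : ℕ) : ℝ) = (n:ℝ) - 1 - i := by
      rw [Nat.cast_sub (by omega : i ≤ n - 1), hcast]
    rw [nsmul_eq_mul, hc2]; ring

/-- For `n ≥ 3`, the vector
`(n-2, -1, …, -1, 0, 0, -1, …, -1, n-2)` of length `2n` is an eigenvector of
`M(BP_n)` with eigenvalue `n - 1`. -/
theorem v8_eigenvector_Mbp (n : ℕ) (hn : 3 ≤ n) :
    v8 n ≠ 0 ∧ (Mbp n).mulVec (v8 n) = ((n : ℝ) - 1) • v8 n := by
  have hnR : (3:ℝ) ≤ (n:ℝ) := by exact_mod_cast hn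
  have hcast : ((n - 1 : ℕ) : ℝ) = (n:ℝ) - 1 := by
    rw [Nat.cast_sub (by omega : 1 ≤ n)]; norm_num
  constructor
  · intro h
    have h0 := congrFun h (Sum.inl ⟨0, by omega⟩)
    norm_num [v8] at h0
    linarith
  · have hv8 : v8 n = Sum.elim (fun j : Fin n => wx n j) (fun j : Fin n => wy n j) := rfl
    rw [Mbp, hv8, Matrix.fromBlocks_mulVec]
    funext i
    cases i with
    | inl i =>
      simp only [Sum.elim_inl, Pi.add_apply, Pi.smul_apply, smul_eq_mul]
      rw [An, Matrix.mulVec_diagonal]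
      have hD : ((Dn n).transpose.mulVec (Sum.elim (fun j : Fin n => wx n j)
          (fun j : Fin n => wy n j) ∘ Sum.inr)) i
          = ∑ j ∈ Finset.range n, (if j ≤ (i:ℕ) then wy n j else 0) := by
        rw [Matrix.mulVec]; rw [dotProduct]
        rw [← Fin.sum_univ_eq_sum_range (fun j => if j ≤ (i:ℕ) then wy n j else 0) n]
        apply Finset.sum_congr rfl
        intro j _
        simp only [Matrix.transpose_apply, Dn, Matrix.of_apply, Function.comp_apply,
          Sum.elim_inr, Fin.le_def]
        split <;> simp
      rw [hD, sumy n i hn i.isLt]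
      simp only [Function.comp_apply, Sum.elim_inl, Sum.elim_inr, wx]
      by_cases h0 : (i:ℕ) = 0
      · simp only [if_pos h0, h0, if_neg (show ¬((0:ℕ) = n-1) by omega)]
        push_cast; ring
      · by_cases h1 : (i:ℕ) = n - 1
        · simp only [if_neg h0, if_pos h1]
          rw [h1, hcast]; ring
        · simp only [if_neg h0, if_neg h1]
          ring
    | inr i =>
      simp only [Sum.elim_inr, Pi.add_apply, Pi.smul_apply, smul_eq_mul]
      rw [Cn, Matrix.mulVec_diagonal]
      have hD : ((Dn n).mulVec (Sum.elim (fun j : Fin n => wx n j)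
          (fun j : Fin n => wy n j) ∘ Sum.inl)) i
          = ∑ j ∈ Finset.range n, (if (i:ℕ) ≤ j then wx n j else 0) := by
        rw [Matrix.mulVec]; rw [dotProduct]
        rw [← Fin.sum_univ_eq_sum_range (fun j => if (i:ℕ) ≤ j then wx n j else 0) n]
        apply Finset.sum_congr rfl
        intro j _
        simp only [Dn, Matrix.of_apply, Function.comp_apply, Sum.elim_inl, Fin.le_def]
        split <;> simp
      rw [hD, sumx n i hn i.isLt]
      simp only [Function.comp_apply, Sum.elim_inl, Sum.elim_inr, wy]
      by_cases h1 : (i:ℕ) = n - 1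
      · simp only [if_pos h1, if_neg (show ¬((i:ℕ) = 0) by omega)]
        rw [h1, hcast]; ring
      · by_cases h0 : (i:ℕ) = 0
        · simp only [if_neg h1, if_pos h0]
          ring
        · simp only [if_neg h1, if_neg h0]
          ring
end

section
/- For every n ≥ 1, every integer in the set {0, 1, …, n} \ {⌊n/2⌋} is an eigenvalue of the 2n×2n matrix M(BP_n) = [[A_n, D_n^T],[D_n, C_n]]. -/
private lemma sum_ind_one (n a c : ℕ) (P : ℕ → Prop) [DecidablePred P]
    (hc : c ≤ n) (h : ∀ k, k < n → (P k ↔ a ≤ k ∧ k < c)) :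
    (∑ k ∈ Finset.range n, if P k then (1:ℝ) else 0) = ((c - a : ℕ) : ℝ) := by
  have hfilter : (Finset.range n).filter P = Finset.Ico a c := by
    ext k
    simp only [Finset.mem_filter, Finset.mem_range, Finset.mem_Ico]
    constructor
    · rintro ⟨hk, hp⟩; exact (h k hk).1 hp
    · intro hkc
      have hkn : k < n := lt_of_lt_of_le hkc.2 hc
      exact ⟨hkn, (h k hkn).2 hkc⟩
  rw [Finset.sum_boole, hfilter, Nat.card_Ico]

private lemma sum_ind_zero (n : ℕ) (P : ℕ → Prop) [DecidablePred P] (c : ℝ)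
    (h : ∀ k, k < n → ¬ P k) :
    (∑ k ∈ Finset.range n, if P k then c else 0) = 0 :=
  Finset.sum_eq_zero fun k hk => if_neg (h k (Finset.mem_range.mp hk))

private lemma sum_ind_single (n k0 : ℕ) (P : ℕ → Prop) [DecidablePred P] (c : ℝ)
    (hk0 : k0 < n) (h : ∀ k, k < n → (P k ↔ k = k0)) :
    (∑ k ∈ Finset.range n, if P k then c else 0) = c := by
  rw [Finset.sum_eq_single k0]
  · rw [if_pos ((h k0 hk0).2 rfl)]
  · intro k hk hne
    exact if_neg fun hp => hne ((h k (Finset.mem_range.mp hk)).1 hp)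
  · intro hk; exact absurd (Finset.mem_range.mpr hk0) hk


private lemma eig_aux (n m : ℕ) (X Y : ℕ → ℝ)
    (htop : ∀ j : Fin n, ((n:ℝ) - (j:ℕ) - 1) * X (j:ℕ)
        + (∑ k ∈ Finset.range n, if k ≤ (j:ℕ) then Y k else 0) = m * X (j:ℕ))
    (hbot : ∀ j : Fin n, (∑ k ∈ Finset.range n, if (j:ℕ) ≤ k then X k else 0)
        + ((j:ℕ) : ℝ) * Y (j:ℕ) = m * Y (j:ℕ))
    (hnz : Sum.elim (fun j : Fin n => X (j:ℕ)) (fun j : Fin n => Y (j:ℕ)) ≠ 0) :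
    Module.End.HasEigenvalue (Matrix.toLin' (Mbp n)) (m : ℝ) := by
  apply Module.End.hasEigenvalue_of_hasEigenvector
    (x := Sum.elim (fun j : Fin n => X (j:ℕ)) (fun j : Fin n => Y (j:ℕ)))
  refine ⟨Module.End.mem_eigenspace_iff.mpr ?_, hnz⟩
  rw [Matrix.toLin'_apply]
  unfold Mbp
  rw [Matrix.fromBlocks_mulVec]
  funext i
  cases i with
  | inl j =>
      have h1 : (An n).mulVec (fun j : Fin n => X (j:ℕ)) j = ((n:ℝ) - (j:ℕ) - 1) * X (j:ℕ) := by
        simp [An, Matrix.mulVec_diagonal]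
      have h2 : ((Dn n).transpose.mulVec (fun j : Fin n => Y (j:ℕ))) j
          = ∑ k ∈ Finset.range n, if k ≤ (j:ℕ) then Y k else 0 := by
        rw [Matrix.mulVec]
        simp only [dotProduct, Dn, Matrix.transpose_apply, Matrix.of_apply, ite_mul,
          one_mul, zero_mul]
        rw [← Fin.sum_univ_eq_sum_range (fun k => if k ≤ (j:ℕ) then Y k else 0) n]
        exact Finset.sum_congr rfl fun k _ => by simp only [Fin.le_def]
      simp only [Sum.elim_inl, Sum.elim_comp_inl, Sum.elim_comp_inr, Pi.add_apply, Pi.smul_apply]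
      rw [h1, h2, htop j]
      simp [mul_comm]
  | inr j =>
      have h1 : (Cn n).mulVec (fun j : Fin n => Y (j:ℕ)) j = ((j:ℕ) : ℝ) * Y (j:ℕ) := by
        simp [Cn, Matrix.mulVec_diagonal]
      have h2 : ((Dn n).mulVec (fun j : Fin n => X (j:ℕ))) j
          = ∑ k ∈ Finset.range n, if (j:ℕ) ≤ k then X k else 0 := by
        rw [Matrix.mulVec]
        simp only [dotProduct, Dn, Matrix.of_apply, ite_mul, one_mul, zero_mul]
        rw [← Fin.sum_univ_eq_sum_range (fun k => if (j:ℕ) ≤ k then X k else 0) n]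
        exact Finset.sum_congr rfl fun k _ => by simp only [Fin.le_def]
      simp only [Sum.elim_inr, Sum.elim_comp_inl, Sum.elim_comp_inr, Pi.add_apply, Pi.smul_apply]
      rw [h1, h2, hbot j]
      simp [mul_comm]

private def cA (n m : ℕ) : ℝ := (n:ℝ) - 1 - 2*m

private def XA (n m k : ℕ) : ℝ :=
  (if m ≤ k ∧ k + m + 2 ≤ n then 1 else 0) + (if k + m + 1 = n then -(cA n m) else 0)

private def YA (n m k : ℕ) : ℝ :=
  (if m + 1 ≤ k ∧ k + m + 1 ≤ n then 1 else 0) + (if k = m then -(cA n m) else 0)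

private lemma caseA_top (n m : ℕ) (h : 2*m+2 ≤ n) (j : ℕ) (hj : j < n) :
    ((n:ℝ) - j - 1) * XA n m j + (∑ k ∈ Finset.range n, if k ≤ j then YA n m k else 0)
      = (m:ℝ) * XA n m j := by
  have hsum : (∑ k ∈ Finset.range n, if k ≤ j then YA n m k else 0)
      = ((min (j+1) (n-m) - (m+1) : ℕ) : ℝ) + (if m ≤ j then -(cA n m) else 0) := by
    have e1 : ∀ k : ℕ, (if k ≤ j then YA n m k else 0)
        = (if k ≤ j ∧ m+1 ≤ k ∧ k+m+1 ≤ n then (1:ℝ) else 0)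
          + (if k ≤ j ∧ k = m then -(cA n m) else 0) := by
      intro k; unfold YA; split_ifs <;> (first | ring1 | (exfalso; omega))
    rw [Finset.sum_congr rfl (fun k _ => e1 k), Finset.sum_add_distrib,
      sum_ind_one n (m+1) (min (j+1) (n-m)) _ (by omega) (fun k hk => by omega)]
    congr 1
    by_cases hmj : m ≤ j
    · rw [sum_ind_single n m _ (-(cA n m)) (by omega) (fun k hk => by omega), if_pos hmj]
    · rw [sum_ind_zero n _ (-(cA n m)) (fun k hk => by omega), if_neg hmj]
  rw [hsum]
  unfold XA cA
  rcases (by omega : j < m ∨ (m ≤ j ∧ j+m+2 ≤ n) ∨ j+m+1 = n ∨ n ≤ j+m) with hR | hR | hR | hR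
  · rw [if_neg (by omega : ¬(m ≤ j ∧ j+m+2 ≤ n)), if_neg (by omega : ¬(j+m+1 = n)),
      if_neg (by omega : ¬ m ≤ j), show min (j+1) (n-m) - (m+1) = 0 from by omega]
    norm_num
  · rw [if_pos hR, if_neg (by omega : ¬(j+m+1 = n)), if_pos hR.1,
      show min (j+1) (n-m) - (m+1) = j - m from by omega, Nat.cast_sub hR.1]
    ring
  · rw [if_neg (by omega : ¬(m ≤ j ∧ j+m+2 ≤ n)), if_pos hR, if_pos (by omega : m ≤ j),
      show min (j+1) (n-m) - (m+1) = j - m from by omega, Nat.cast_sub (by omega)]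
    have hn' : ((n:ℕ):ℝ) = (j:ℝ) + m + 1 := by exact_mod_cast hR.symm
    rw [hn']; ring
  · rw [if_neg (by omega : ¬(m ≤ j ∧ j+m+2 ≤ n)), if_neg (by omega : ¬(j+m+1 = n)),
      if_pos (by omega : m ≤ j),
      show min (j+1) (n-m) - (m+1) = n - (2*m+1) from by omega, Nat.cast_sub (by omega)]
    push_cast; ring

private lemma caseA_bot (n m : ℕ) (h : 2*m+2 ≤ n) (j : ℕ) (hj : j < n) :
    (∑ k ∈ Finset.range n, if j ≤ k then XA n m k else 0) + (j:ℝ) * YA n m j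
      = (m:ℝ) * YA n m j := by
  have hsum : (∑ k ∈ Finset.range n, if j ≤ k then XA n m k else 0)
      = ((n - m - 1 - max j m : ℕ) : ℝ) + (if j+m+1 ≤ n then -(cA n m) else 0) := by
    have e1 : ∀ k : ℕ, (if j ≤ k then XA n m k else 0)
        = (if j ≤ k ∧ m ≤ k ∧ k+m+2 ≤ n then (1:ℝ) else 0)
          + (if j ≤ k ∧ k+m+1 = n then -(cA n m) else 0) := by
      intro k; unfold XA; split_ifs <;> (first | ring1 | (exfalso; omega))
    rw [Finset.sum_congr rfl (fun k _ => e1 k), Finset.sum_add_distrib,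
      show n - m - 1 - max j m = n - m - 1 - max j m from rfl,
      sum_ind_one n (max j m) (n - m - 1) _ (by omega) (fun k hk => by omega)]
    congr 1
    by_cases hjn : j + m + 1 ≤ n
    · rw [sum_ind_single n (n-m-1) _ (-(cA n m)) (by omega) (fun k hk => by omega), if_pos hjn]
    · rw [sum_ind_zero n _ (-(cA n m)) (fun k hk => by omega), if_neg hjn]
  rw [hsum]
  unfold YA cA
  rcases (by omega : j < m ∨ j = m ∨ (m+1 ≤ j ∧ j+m+1 ≤ n) ∨ n ≤ j+m) with hR | hR | hR | hR
  · rw [if_neg (by omega : ¬(m+1 ≤ j ∧ j+m+1 ≤ n)), if_neg (by omega : ¬(j = m)),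
      if_pos (by omega : j+m+1 ≤ n),
      show n - m - 1 - max j m = n - (2*m+1) from by omega, Nat.cast_sub (by omega)]
    push_cast; ring
  · subst hR
    rw [if_neg (by omega : ¬(j+1 ≤ j ∧ j+j+1 ≤ n)), if_pos rfl,
      if_pos (by omega : j+j+1 ≤ n),
      show n - j - 1 - max j j = n - (2*j+1) from by omega, Nat.cast_sub (by omega)]
    push_cast; ring
  · rw [if_pos hR, if_neg (by omega : ¬(j = m)), if_pos hR.2,
      show n - m - 1 - max j m = n - (j+m+1) from by omega, Nat.cast_sub (by omega)]
    push_cast; ring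
  · rw [if_neg (by omega : ¬(m+1 ≤ j ∧ j+m+1 ≤ n)), if_neg (by omega : ¬(j = m)),
      if_neg (by omega : ¬(j+m+1 ≤ n)),
      show n - m - 1 - max j m = 0 from by omega]
    norm_num

private def cB (n m : ℕ) : ℝ := 2*(m:ℝ) - n

private def XB (n m k : ℕ) : ℝ :=
  (if n ≤ k + m ∧ k + 1 ≤ m then (-1:ℝ) else 0) + (if k + m + 1 = n then cB n m else 0)

private def YB (n m k : ℕ) : ℝ :=
  (if n ≤ k + m ∧ k + 1 ≤ m then (-1:ℝ) else 0) + (if k = m then cB n m else 0)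

private lemma caseB_top (n m : ℕ) (hm : m ≤ n) (h : n + 1 ≤ 2*m) (j : ℕ) (hj : j < n) :
    ((n:ℝ) - j - 1) * XB n m j + (∑ k ∈ Finset.range n, if k ≤ j then YB n m k else 0)
      = (m:ℝ) * XB n m j := by
  have hsum : (∑ k ∈ Finset.range n, if k ≤ j then YB n m k else 0)
      = -((min (j+1) m - (n-m) : ℕ) : ℝ) + (if m ≤ j then cB n m else 0) := by
    have e1 : ∀ k : ℕ, (if k ≤ j then YB n m k else 0)
        = -(if k ≤ j ∧ n ≤ k+m ∧ k+1 ≤ m then (1:ℝ) else 0)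
          + (if k ≤ j ∧ k = m then cB n m else 0) := by
      intro k; unfold YB; split_ifs <;> (first | ring1 | (exfalso; omega))
    rw [Finset.sum_congr rfl (fun k _ => e1 k), Finset.sum_add_distrib, Finset.sum_neg_distrib,
      sum_ind_one n (n-m) (min (j+1) m) _ (by omega) (fun k hk => by omega)]
    congr 1
    by_cases hmj : m ≤ j
    · rw [sum_ind_single n m _ (cB n m) (by omega) (fun k hk => by omega), if_pos hmj]
    · rw [sum_ind_zero n _ (cB n m) (fun k hk => by omega), if_neg hmj]
  rw [hsum]
  unfold XB cB
  rcases (by omega : j+m+2 ≤ n ∨ j+m+1 = n ∨ (n ≤ j+m ∧ j+1 ≤ m) ∨ m ≤ j)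
    with hR | hR | hR | hR
  · rw [if_neg (by omega : ¬(n ≤ j+m ∧ j+1 ≤ m)), if_neg (by omega : ¬(j+m+1 = n)),
      if_neg (by omega : ¬ m ≤ j), show min (j+1) m - (n-m) = 0 from by omega]
    norm_num
  · rw [if_neg (by omega : ¬(n ≤ j+m ∧ j+1 ≤ m)), if_pos hR,
      if_neg (by omega : ¬ m ≤ j), show min (j+1) m - (n-m) = 0 from by omega]
    have hn' : ((n:ℕ):ℝ) = (j:ℝ) + m + 1 := by exact_mod_cast hR.symm
    rw [hn']; push_cast; ring
  · rw [if_pos hR, if_neg (by omega : ¬(j+m+1 = n)), if_neg (by omega : ¬ m ≤ j),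
      show min (j+1) m - (n-m) = (j+m+1) - n from by omega, Nat.cast_sub (by omega)]
    push_cast; ring
  · rw [if_neg (by omega : ¬(n ≤ j+m ∧ j+1 ≤ m)), if_neg (by omega : ¬(j+m+1 = n)),
      if_pos hR, show min (j+1) m - (n-m) = 2*m - n from by omega, Nat.cast_sub (by omega)]
    push_cast; ring

private lemma caseB_bot (n m : ℕ) (hm : m ≤ n) (h : n + 1 ≤ 2*m) (j : ℕ) (hj : j < n) :
    (∑ k ∈ Finset.range n, if j ≤ k then XB n m k else 0) + (j:ℝ) * YB n m j
      = (m:ℝ) * YB n m j := by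
  have hsum : (∑ k ∈ Finset.range n, if j ≤ k then XB n m k else 0)
      = -((m - max j (n-m) : ℕ) : ℝ) + (if j+m+1 ≤ n then cB n m else 0) := by
    have e1 : ∀ k : ℕ, (if j ≤ k then XB n m k else 0)
        = -(if j ≤ k ∧ n ≤ k+m ∧ k+1 ≤ m then (1:ℝ) else 0)
          + (if j ≤ k ∧ k+m+1 = n then cB n m else 0) := by
      intro k; unfold XB; split_ifs <;> (first | ring1 | (exfalso; omega))
    rw [Finset.sum_congr rfl (fun k _ => e1 k), Finset.sum_add_distrib, Finset.sum_neg_distrib,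
      sum_ind_one n (max j (n-m)) m _ hm (fun k hk => by omega)]
    congr 1
    by_cases hjn : j + m + 1 ≤ n
    · rw [sum_ind_single n (n-m-1) _ (cB n m) (by omega) (fun k hk => by omega), if_pos hjn]
    · rw [sum_ind_zero n _ (cB n m) (fun k hk => by omega), if_neg hjn]
  rw [hsum]
  unfold YB cB
  rcases (by omega : j+m+1 ≤ n ∨ (n ≤ j+m ∧ j+1 ≤ m) ∨ j = m ∨ m+1 ≤ j)
    with hR | hR | hR | hR
  · rw [if_neg (by omega : ¬(n ≤ j+m ∧ j+1 ≤ m)), if_neg (by omega : ¬(j = m)),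
      if_pos hR, show m - max j (n-m) = 2*m - n from by omega, Nat.cast_sub (by omega)]
    push_cast; ring
  · rw [if_pos hR, if_neg (by omega : ¬(j = m)), if_neg (by omega : ¬(j+m+1 ≤ n)),
      show m - max j (n-m) = m - j from by omega, Nat.cast_sub (by omega)]
    push_cast; ring
  · subst hR
    rw [if_neg (by omega : ¬(n ≤ j+j ∧ j+1 ≤ j)), if_pos rfl,
      if_neg (by omega : ¬(j+j+1 ≤ n)), show j - max j (n-j) = 0 from by omega]
    norm_num
  · rw [if_neg (by omega : ¬(n ≤ j+m ∧ j+1 ≤ m)), if_neg (by omega : ¬(j = m)),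
      if_neg (by omega : ¬(j+m+1 ≤ n)), show m - max j (n-m) = 0 from by omega]
    norm_num

private lemma caseA (n m : ℕ) (h : 2*m+2 ≤ n) :
    Module.End.HasEigenvalue (Matrix.toLin' (Mbp n)) (m : ℝ) := by
  apply eig_aux n m (XA n m) (YA n m)
  · exact fun j => caseA_top n m h (j:ℕ) j.isLt
  · exact fun j => caseA_bot n m h (j:ℕ) j.isLt
  · intro h0
    have h1 := congrFun h0 (Sum.inr ⟨m, by omega⟩)
    simp only [Sum.elim_inr, Pi.zero_apply] at h1
    unfold YA at h1
    rw [if_neg (by omega : ¬(m+1 ≤ m ∧ m+m+1 ≤ n)), if_pos rfl] at h1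
    have : (2*(m:ℝ)+2) ≤ n := by exact_mod_cast h
    unfold cA at h1
    norm_num at h1
    linarith

private lemma caseB (n m : ℕ) (hn : 1 ≤ n) (hm : m ≤ n) (h : n + 1 ≤ 2*m) :
    Module.End.HasEigenvalue (Matrix.toLin' (Mbp n)) (m : ℝ) := by
  apply eig_aux n m (XB n m) (YB n m)
  · exact fun j => caseB_top n m hm h (j:ℕ) j.isLt
  · exact fun j => caseB_bot n m hm h (j:ℕ) j.isLt
  · intro h0
    have hcB : (1:ℝ) ≤ cB n m := by
      unfold cB
      have h' : ((n:ℕ):ℝ) + 1 ≤ 2*(m:ℝ) := by exact_mod_cast h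
      linarith
    rcases lt_or_eq_of_le hm with hlt | heq
    · have h1 := congrFun h0 (Sum.inr ⟨m, hlt⟩)
      simp only [Sum.elim_inr, Pi.zero_apply] at h1
      unfold YB at h1
      rw [if_neg (by omega : ¬(n ≤ m+m ∧ m+1 ≤ m)), if_pos rfl] at h1
      norm_num at h1
      linarith
    · have h1 := congrFun h0 (Sum.inl ⟨0, by omega⟩)
      simp only [Sum.elim_inl, Pi.zero_apply] at h1
      unfold XB at h1
      rw [if_pos (by omega : n ≤ 0+m ∧ 0+1 ≤ m), if_neg (by omega : ¬(0+m+1 = n))] at h1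
      norm_num at h1

/-- For every `n ≥ 1`, every integer in
`{0, 1, …, n} \ {⌊n/2⌋}` is an eigenvalue of the `2n × 2n` matrix
`M(BP_n) = [[A_n, D_nᵀ], [D_n, C_n]]`. -/
theorem integer_eigenvalues_Mbp (n : ℕ) (hn : 1 ≤ n) (m : ℕ) (hm : m ≤ n)
    (hne : m ≠ n / 2) :
    Module.End.HasEigenvalue (Matrix.toLin' (Mbp n)) (m : ℝ) := by
  rcases Nat.lt_trichotomy (2*m) n with hA | hE | hB
  · exact caseA n m (by omega)
  · exact absurd (by omega : m = n / 2) hne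
  · exact caseB n m hn hm (by omega)
end
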